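/- Let f₁(z) := (1/(2π)) ∫_{-2}^{2} √(4 − y²)/(z − y) dy be the Stieltjes transform of Wigner's semicircle law. Then for every z ∈ ℂ with Im(z) > 0, the value f₁(z) satisfies the quadratic equation f₁(z)² − z·f₁(z) + 1 = 0, and moreover Im(f₁(z)) < 0. -/

import Mathlib

open MeasureTheory Complex Metric

private lemma myCircleIntegral_add {f g : ℂ → ℂ} {c : ℂ} {R : ℝ}
    (hf : CircleIntegrable f c R) (hg : CircleIntegrable g c R) :
    (∮ u in C(c, R), (f u + g u)) = (∮ u in C(c, R), f u) + ∮ u in C(c, R), g u := by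
  simp only [circleIntegral, smul_add, intervalIntegral.integral_add hf.out hg.out]

private lemma lem_circle (z a b : ℂ) (hab : a * b = 1) (hsum : a + b = z)
    (ha : 1 < ‖a‖) (hb : ‖b‖ < 1) :
    (∮ u in C(0, 1), (u^2 - 1)^2 / (u^2 * (u - a) * (u - b)))
      = 2 * Real.pi * I * (z + b - a) := by
  have h0 : ∀ u : ℂ, u ∈ sphere (0:ℂ) 1 → u ≠ 0 := fun u hu h => by
    rw [mem_sphere_zero_iff_norm] at hu; simp [h] at hu
  have hua : ∀ u : ℂ, u ∈ sphere (0:ℂ) 1 → u - a ≠ 0 := fun u hu h => by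
    rw [mem_sphere_zero_iff_norm] at hu
    rw [sub_eq_zero] at h; rw [h] at hu; linarith
  have hub : ∀ u : ℂ, u ∈ sphere (0:ℂ) 1 → u - b ≠ 0 := fun u hu h => by
    rw [mem_sphere_zero_iff_norm] at hu
    rw [sub_eq_zero] at h; rw [h] at hu; linarith
  have hcont : ∀ w : ℂ, 1 < ‖w‖ ∨ ‖w‖ < 1 →
      CircleIntegrable (fun u => (u - w)⁻¹) (0:ℂ) 1 := by
    intro w hw
    refine ContinuousOn.circleIntegrable zero_le_one ?_
    refine ContinuousOn.inv₀ (by fun_prop) ?_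
    intro u hu h
    rw [mem_sphere_zero_iff_norm] at hu
    rw [sub_eq_zero] at h
    rw [h] at hu
    rcases hw with hw | hw <;> linarith
  have hia : CircleIntegrable (fun u => (a - b) * (u - a)⁻¹) (0:ℂ) 1 :=
    ((hcont a (Or.inl ha)).smul (a - b) : )
  have hib : CircleIntegrable (fun u => (b - a) * (u - b)⁻¹) (0:ℂ) 1 :=
    ((hcont b (Or.inr hb)).smul (b - a) : )
  have hiz : CircleIntegrable (fun u : ℂ => z * u⁻¹) (0:ℂ) 1 := by
    refine ContinuousOn.circleIntegrable zero_le_one ?_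
    exact continuousOn_const.mul (ContinuousOn.inv₀ (by fun_prop) h0)
  have hisq : CircleIntegrable (fun u : ℂ => (u^2)⁻¹) (0:ℂ) 1 := by
    refine ContinuousOn.circleIntegrable zero_le_one ?_
    exact ContinuousOn.inv₀ (by fun_prop) (fun u hu => pow_ne_zero _ (h0 u hu))
  have hrest : CircleIntegrable
      (fun u : ℂ => (u^2)⁻¹ + ((a - b) * (u - a)⁻¹ + (b - a) * (u - b)⁻¹)) (0:ℂ) 1 :=
    hisq.add (hia.add hib)
  have hcongr : (∮ u in C(0, 1), (u^2 - 1)^2 / (u^2 * (u - a) * (u - b)))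
      = ∮ u in C(0, 1), ((1 : ℂ) + (z * u⁻¹ + ((u^2)⁻¹
          + ((a - b) * (u - a)⁻¹ + (b - a) * (u - b)⁻¹)))) := by
    apply circleIntegral.integral_congr zero_le_one
    intro u hu
    have h1 := h0 u hu
    have h2 := hua u hu
    have h3 := hub u hu
    have hN : (u^2 - 1)^2 = u^2*(u-a)*(u-b) + (z*(u*((u-a)*(u-b))) + ((u-a)*(u-b)
        + ((a-b)*(u^2*(u-b)) + (b-a)*(u^2*(u-a))))) := by
      rw [← hsum]; linear_combination (4*u^2 - (1 + u*(a+b) + u^2))*hab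
    have h4 : (1 : ℂ) + (z * u⁻¹ + ((u^2)⁻¹ + ((a - b) * (u - a)⁻¹ + (b - a) * (u - b)⁻¹)))
        = (u^2*(u-a)*(u-b) + (z*(u*((u-a)*(u-b))) + ((u-a)*(u-b)
        + ((a-b)*(u^2*(u-b)) + (b-a)*(u^2*(u-a)))))) / (u^2 * (u - a) * (u - b)) := by
      field_simp
    show (u^2 - 1)^2 / (u^2 * (u - a) * (u - b))
      = (1 : ℂ) + (z * u⁻¹ + ((u^2)⁻¹ + ((a - b) * (u - a)⁻¹ + (b - a) * (u - b)⁻¹)))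
    rw [h4, hN]
  rw [hcongr]
  have s1 := myCircleIntegral_add (f := fun _u : ℂ => (1:ℂ))
    (g := fun u => z * u⁻¹ + ((u^2)⁻¹ + ((a - b) * (u - a)⁻¹ + (b - a) * (u - b)⁻¹)))
    (circleIntegrable_const 1 0 1) (hiz.add hrest)
  have s2 := myCircleIntegral_add (f := fun u : ℂ => z * u⁻¹)
    (g := fun u => (u^2)⁻¹ + ((a - b) * (u - a)⁻¹ + (b - a) * (u - b)⁻¹)) hiz hrest
  have s3 := myCircleIntegral_add (f := fun u : ℂ => (u^2)⁻¹)
    (g := fun u => (a - b) * (u - a)⁻¹ + (b - a) * (u - b)⁻¹) hisq (hia.add hib)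
  have s4 := myCircleIntegral_add (f := fun u : ℂ => (a - b) * (u - a)⁻¹)
    (g := fun u : ℂ => (b - a) * (u - b)⁻¹) hia hib
  have e1 : (∮ _u in C((0:ℂ), 1), (1:ℂ)) = 0 := by
    have := circleIntegral.integral_sub_zpow_of_ne (by decide : (0:ℤ) ≠ -1) (0:ℂ) (0:ℂ) 1
    simpa using this
  have e2 : (∮ u in C((0:ℂ), 1), z * u⁻¹) = z * (2 * Real.pi * I) := by
    have h := circleIntegral.integral_sub_inv_of_mem_ball (by simp : (0:ℂ) ∈ ball (0:ℂ) 1)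
    have h' : (∮ u in C((0:ℂ), 1), z * u⁻¹) = z • ∮ u in C((0:ℂ), 1), u⁻¹ := by
      rw [← circleIntegral.integral_smul]
      simp [smul_eq_mul]
    rw [h']
    simp only [smul_eq_mul]
    rw [show (fun u : ℂ => u⁻¹) = (fun u : ℂ => (u - 0)⁻¹) by funext u; rw [sub_zero]] at *
    rw [h]
  have e3 : (∮ u in C((0:ℂ), 1), (u^2)⁻¹) = 0 := by
    have := circleIntegral.integral_sub_zpow_of_ne (by decide : (-2:ℤ) ≠ -1) (0:ℂ) (0:ℂ) 1
    simp only [sub_zero] at this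
    rw [show (fun u : ℂ => (u^2)⁻¹) = (fun u : ℂ => u ^ (-2:ℤ)) from funext fun u => by
      rw [zpow_neg, zpow_two]; norm_num [pow_two]]
    exact this
  have e4 : (∮ u in C((0:ℂ), 1), (a - b) * (u - a)⁻¹) = 0 := by
    have hz0 : (∮ u in C((0:ℂ), 1), (u - a)⁻¹) = 0 := by
      apply circleIntegral_eq_zero_of_differentiable_on_off_countable zero_le_one
        Set.countable_empty
      · apply ContinuousOn.inv₀ (by fun_prop)
        intro u hu h
        rw [mem_closedBall_zero_iff] at hu
        rw [sub_eq_zero] at h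
        rw [h] at hu
        linarith
      · intro u hu
        rw [Set.mem_diff, mem_ball_zero_iff] at hu
        have hne : u - a ≠ 0 := sub_ne_zero.2 (fun h => by
          rw [h] at hu; exact absurd hu.1 (by linarith))
        exact (differentiableAt_id.sub_const a).inv hne
    calc (∮ u in C((0:ℂ), 1), (a - b) * (u - a)⁻¹)
        = (a - b) • ∮ u in C((0:ℂ), 1), (u - a)⁻¹ := by
          rw [← circleIntegral.integral_smul]; simp [smul_eq_mul]
      _ = 0 := by rw [hz0, smul_zero]
  have e5 : (∮ u in C((0:ℂ), 1), (b - a) * (u - b)⁻¹) = (b - a) * (2 * Real.pi * I) := by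
    have h := circleIntegral.integral_sub_inv_of_mem_ball
      (by rwa [mem_ball_zero_iff] : b ∈ ball (0:ℂ) 1)
    calc (∮ u in C((0:ℂ), 1), (b - a) * (u - b)⁻¹)
        = (b - a) • ∮ u in C((0:ℂ), 1), (u - b)⁻¹ := by
          rw [← circleIntegral.integral_smul]; simp [smul_eq_mul]
      _ = (b - a) * (2 * Real.pi * I) := by rw [h, smul_eq_mul]
  beta_reduce at s1 s2 s3 s4
  rw [s1, s2, s3, s4, e1, e2, e3, e4, e5]
  ring

private lemma lem_param (z a b : ℂ) (hz : 0 < z.im) (hab : a * b = 1) (hsum : a + b = z)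
    (ha : 1 < ‖a‖) (hb : ‖b‖ < 1) :
    (∮ u in C(0, 1), I⁻¹ * ((u^2 - 1)^2 / (u^2 * (u - a) * (u - b))))
      = ∫ θ in (0:ℝ)..(2*Real.pi), (4:ℂ) * (Real.sin θ : ℂ)^2 / (z - 2*(Real.cos θ : ℂ)) := by
  rw [circleIntegral]
  apply intervalIntegral.integral_congr
  intro θ _
  have hu : circleMap 0 1 θ = (Real.cos θ : ℂ) + (Real.sin θ : ℂ) * I := by
    simp [circleMap, Complex.exp_mul_I, ← Complex.ofReal_cos, ← Complex.ofReal_sin]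
  set c : ℂ := (Real.cos θ : ℂ) with hc
  set s : ℂ := (Real.sin θ : ℂ) with hs
  have hpy : s^2 + c^2 = 1 := by
    rw [hs, hc]; norm_cast; exact Real.sin_sq_add_cos_sq θ
  have habs : ‖c + s * I‖ = 1 := by
    rw [← hu, show circleMap 0 1 θ = Complex.exp (θ * I) by simp [circleMap]]
    exact Complex.norm_exp_ofReal_mul_I θ
  have hu0 : c + s * I ≠ 0 := by
    intro h; rw [h] at habs; simp at habs
  have h2 : c + s * I - a ≠ 0 := by
    intro h; rw [sub_eq_zero] at h; rw [h] at habs; linarith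
  have h3 : c + s * I - b ≠ 0 := by
    intro h; rw [sub_eq_zero] at h; rw [h] at habs; linarith
  have hd : z - 2 * c ≠ 0 := by
    intro h
    have := congrArg Complex.im h
    simp [hc] at this
    linarith
  have hfac : (c + s*I - a) * (c + s*I - b) = (c + s*I) * (2*c - z) := by
    linear_combination hab - (c + s*I)*hsum + s^2*Complex.I_sq - hpy
  have hnum : ((c + s*I)^2 - 1)^2 = -(4*s^2*(c + s*I)^2) := by
    linear_combination (4*s^2*(c^2+s^2) + 4*s^3*(c*I - s)
        + s^2*(s^2*I^2 + 2*s^2 + c^2 - 1)) * Complex.I_sq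
      + (4*s*(c*I - s) + (s^2*I^2 + 2*s^2 + c^2 - 1)) * hpy
  show deriv (circleMap 0 1) θ • (I⁻¹ * (((circleMap 0 1 θ)^2 - 1)^2 /
      ((circleMap 0 1 θ)^2 * (circleMap 0 1 θ - a) * (circleMap 0 1 θ - b))))
    = 4 * s^2 / (z - 2*c)
  rw [deriv_circleMap, hu, smul_eq_mul,
    mul_assoc ((c + s*I)^2) (c + s*I - a) (c + s*I - b), hfac, hnum]
  have hd' : 2*c - z ≠ 0 := fun h => hd (by linear_combination -h)
  rw [eq_div_iff hd]
  have hI : (I : ℂ) ≠ 0 := Complex.I_ne_zero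
  field_simp
  linear_combination s^2 * (mul_inv_cancel₀ hd')

private lemma lem_real (z : ℂ) (hz : 0 < z.im) :
    (∫ y in (-2:ℝ)..2, (Real.sqrt (4 - y ^ 2) : ℂ) / (z - (y : ℂ)))
      = (1/2 : ℂ) * ∫ θ in (0:ℝ)..(2*Real.pi),
          (4:ℂ) * (Real.sin θ : ℂ)^2 / (z - 2*(Real.cos θ : ℂ)) := by
  have hden : ∀ w : ℂ, w.im = 0 → z - w ≠ 0 := by
    intro w hw h
    have := congrArg Complex.im h
    simp [hw] at this
    linarith
  set G : ℝ → ℂ := fun θ => (4:ℂ) * (Real.sin θ : ℂ)^2 / (z - 2*(Real.cos θ : ℂ)) with hG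
  have hGcont : Continuous G := by
    apply Continuous.div (by continuity) (by continuity)
    intro θ
    exact hden (2*(Real.cos θ : ℂ)) (by simp)
  have stepA : (∫ y in (-2:ℝ)..2, (Real.sqrt (4 - y ^ 2) : ℂ) / (z - (y : ℂ)))
      = ∫ θ in (0:ℝ)..Real.pi, G θ := by
    have hg : Continuous (fun y : ℝ => (Real.sqrt (4 - y ^ 2) : ℂ) / (z - (y : ℂ))) := by
      apply Continuous.div (by continuity) (by continuity)
      intro y
      exact hden (y:ℂ) (by simp)
    have hsub := intervalIntegral.integral_comp_smul_deriv
      (f := fun θ : ℝ => 2 * Real.cos θ) (f' := fun θ : ℝ => -(2 * Real.sin θ))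
      (g := fun y : ℝ => (Real.sqrt (4 - y ^ 2) : ℂ) / (z - (y : ℂ)))
      (a := 0) (b := Real.pi)
      (fun θ _ => by simpa using ((Real.hasDerivAt_cos θ).const_mul 2))
      ((continuous_const.mul Real.continuous_sin).neg.continuousOn) hg
    norm_num [Real.cos_pi, Real.cos_zero] at hsub
    rw [intervalIntegral.integral_symm, ← hsub, neg_neg]
    apply intervalIntegral.integral_congr
    intro θ hθ
    rw [Set.uIcc_of_le Real.pi_nonneg] at hθ
    have hsin : 0 ≤ Real.sin θ := Real.sin_nonneg_of_mem_Icc ⟨hθ.1, hθ.2⟩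
    have hsqrt : Real.sqrt (4 - (2 * Real.cos θ) ^ 2) = 2 * Real.sin θ := by
      rw [show 4 - (2 * Real.cos θ)^2 = (2 * Real.sin θ)^2 by
        have := Real.sin_sq_add_cos_sq θ; nlinarith]
      exact Real.sqrt_sq (by positivity)
    show 2 * Complex.sin θ * ((Real.sqrt (4 - (2*Real.cos θ)^2) : ℂ) / (z - 2 * Complex.cos θ))
      = G θ
    rw [hG]
    simp only [hsqrt, ← Complex.ofReal_sin, ← Complex.ofReal_cos]
    have h1 : z - 2*(Real.cos θ:ℂ) ≠ 0 := hden _ (by simp)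
    field_simp
    push_cast
    ring
  have stepB : (∫ θ in (-Real.pi:ℝ)..Real.pi, G θ) = 2 * ∫ θ in (0:ℝ)..Real.pi, G θ := by
    have h1 : (∫ θ in (-Real.pi:ℝ)..0, G θ) = ∫ θ in (0:ℝ)..Real.pi, G θ := by
      have hneg := intervalIntegral.integral_comp_neg (a := (0:ℝ)) (b := Real.pi) G
      rw [neg_zero] at hneg
      rw [← hneg]
      apply intervalIntegral.integral_congr
      intro θ _
      show G (-θ) = G θ
      rw [hG]
      simp only [Real.sin_neg, Real.cos_neg, Complex.ofReal_neg, neg_sq]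
    rw [← intervalIntegral.integral_add_adjacent_intervals
      (hGcont.intervalIntegrable (-Real.pi) 0) (hGcont.intervalIntegrable 0 Real.pi), h1]
    ring
  have hper : Function.Periodic G (2*Real.pi) := by
    intro θ
    show G (θ + 2*Real.pi) = G θ
    rw [hG]
    simp only [Real.sin_add_two_pi, Real.cos_add_two_pi]
  have stepC : (∫ θ in (-Real.pi:ℝ)..Real.pi, G θ) = ∫ θ in (0:ℝ)..(2*Real.pi), G θ := by
    have h := hper.intervalIntegral_add_eq (-Real.pi) 0
    rwa [show -Real.pi + 2*Real.pi = Real.pi by ring, zero_add] at h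
  rw [stepA, ← stepC, stepB]
  ring

/-- The Stieltjes transform `f₁` of Wigner's semicircle law satisfies the quadratic
equation `f₁(z)² - z f₁(z) + 1 = 0` on the upper half plane, and there `Im f₁(z) < 0`. -/
theorem stmt1 (z : ℂ) (hz : 0 < z.im) (f₁ : ℂ)
    (hf : f₁ = (1 / (2 * Real.pi) : ℂ) *
      ∫ y in (-2 : ℝ)..2, (Real.sqrt (4 - y ^ 2) : ℂ) / (z - (y : ℂ))) :
    f₁ ^ 2 - z * f₁ + 1 = 0 ∧ f₁.im < 0 := by
  -- construct the two roots of u² - z u + 1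
  obtain ⟨w, hw⟩ : ∃ w : ℂ, w ^ 2 = z ^ 2 - 4 :=
    IsAlgClosed.exists_pow_nat_eq (z ^ 2 - 4) two_pos
  have hne1 : ∀ a b : ℂ, a * b = 1 → a + b = z → ‖b‖ ≠ 1 := by
    intro a b h1 h2 h3
    have hb0 : b ≠ 0 := fun h => by simp [h] at h1
    have hainv : a = b⁻¹ := eq_inv_of_mul_eq_one_left h1
    have hconj : b⁻¹ = (starRingEnd ℂ) b := Complex.inv_eq_conj h3
    have : z.im = 0 := by
      rw [← h2, hainv, hconj]
      simp [Complex.add_im]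
    linarith
  obtain ⟨a, b, hab, hsum, hb⟩ :
      ∃ a b : ℂ, a * b = 1 ∧ a + b = z ∧ ‖b‖ < 1 := by
    set a₀ := (z + w)/2 with ha₀
    set b₀ := (z - w)/2 with hb₀
    have hprod : a₀ * b₀ = 1 := by
      rw [ha₀, hb₀]
      field_simp
      linear_combination -hw
    have hsum₀ : a₀ + b₀ = z := by rw [ha₀, hb₀]; ring
    rcases lt_or_ge (‖b₀‖) 1 with h | h
    · exact ⟨a₀, b₀, hprod, hsum₀, h⟩
    · refine ⟨b₀, a₀, by rw [mul_comm]; exact hprod, by rw [add_comm]; exact hsum₀, ?_⟩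
      have hmul : ‖a₀‖ * ‖b₀‖ = 1 := by
        rw [← norm_mul, hprod, norm_one]
      have hne := hne1 a₀ b₀ hprod hsum₀
      have h' : 1 < ‖b₀‖ := lt_of_le_of_ne h (Ne.symm hne)
      nlinarith [norm_nonneg a₀]
  have hb0 : b ≠ 0 := fun h => by simp [h] at hab
  have ha : 1 < ‖a‖ := by
    have hmul : ‖a‖ * ‖b‖ = 1 := by rw [← norm_mul, hab, norm_one]
    have h1 : ‖b‖ ≠ 0 := fun h => by
      rw [h, mul_zero] at hmul; norm_num at hmul
    have h2 : 0 < ‖b‖ := lt_of_le_of_ne (norm_nonneg b) (Ne.symm h1)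
    nlinarith
  -- the integral computation
  have hint : (∫ y in (-2:ℝ)..2, (Real.sqrt (4 - y ^ 2) : ℂ) / (z - (y : ℂ)))
      = Real.pi * (z + b - a) := by
    have hsmul : (∮ u in C(0, 1), I⁻¹ * ((u^2 - 1)^2 / (u^2 * (u - a) * (u - b))))
        = I⁻¹ * ∮ u in C(0, 1), (u^2 - 1)^2 / (u^2 * (u - a) * (u - b)) := by
      have := circleIntegral.integral_smul (𝕜 := ℂ) I⁻¹
        (fun u => (u^2 - 1)^2 / (u^2 * (u - a) * (u - b))) 0 1
      beta_reduce at this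
      simpa [smul_eq_mul] using this
    rw [lem_real z hz, ← lem_param z a b hz hab hsum ha hb, hsmul,
      lem_circle z a b hab hsum ha hb]
    have hI : (I : ℂ) ≠ 0 := Complex.I_ne_zero
    field_simp
  have hf₁ : f₁ = b := by
    rw [hf, hint, ← hsum]
    have hpi : (Real.pi : ℂ) ≠ 0 := by
      simpa using Real.pi_ne_zero
    field_simp
    ring
  constructor
  · rw [hf₁, ← hsum]
    linear_combination -hab
  · rw [hf₁]
    have hainv : a = b⁻¹ := eq_inv_of_mul_eq_one_left hab
    have hns : 0 < Complex.normSq b := Complex.normSq_pos.2 hb0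
    have hns1 : Complex.normSq b < 1 := by
      rw [Complex.normSq_eq_norm_sq]
      nlinarith [norm_nonneg b]
    have him : a.im + b.im = z.im := by rw [← hsum]; simp [Complex.add_im]
    rw [hainv, Complex.inv_im] at him
    have hdiv : -b.im / Complex.normSq b * Complex.normSq b = -b.im :=
      div_mul_cancel₀ _ (ne_of_gt hns)
    nlinarith [him, hdiv, hns, hns1, hz]
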